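/- Every Lie subalgebra of so(2) ⊕ so(3) of dimension at least 2 is either {0} ⊕ so(3), or the full algebra so(2) ⊕ so(3), or is of the form ℝ(a, ξ) ⊕ ℝ(0, η) for suitable elements (equivalently: every proper subalgebra of dimension ≥ 2 other than {0} ⊕ so(3) has abelian image structure given by a line in so(2) times a 1-dimensional subalgebra of so(3)). In particular, there is no 2-dimensional subalgebra of so(2) ⊕ so(3) whose projection to so(3) is 2-dimensional, and any 3-dimensional proper subalgebra equals {0} ⊕ so(3). -/

import Mathlib

open Matrix

open Matrix Module Submodule

abbrev M3 := Matrix (Fin 3) (Fin 3) ℝ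

def hat (v : Fin 3 → ℝ) : M3 :=
  !![0, -v 2, v 1; v 2, 0, -v 0; -v 1, v 0, 0]

def vee (X : M3) : Fin 3 → ℝ := ![X 2 1, X 0 2, X 1 0]

def cross (u v : Fin 3 → ℝ) : Fin 3 → ℝ :=
  ![u 1 * v 2 - u 2 * v 1, u 2 * v 0 - u 0 * v 2, u 0 * v 1 - u 1 * v 0]

def dot (u v : Fin 3 → ℝ) : ℝ := u 0 * v 0 + u 1 * v 1 + u 2 * v 2

lemma vee_hat (v : Fin 3 → ℝ) : vee (hat v) = v := by
  ext i; fin_cases i <;> simp [vee, hat]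

lemma hat_inj {u v : Fin 3 → ℝ} (h : hat u = hat v) : u = v := by
  rw [← vee_hat u, ← vee_hat v, h]

lemma hat_skew (v : Fin 3 → ℝ) : (hat v)ᵀ = -(hat v) := by
  ext i j; fin_cases i <;> fin_cases j <;> simp [hat]

lemma hat_vee {X : M3} (h : Xᵀ = -X) : hat (vee X) = X := by
  have h' : ∀ i j, X j i = -X i j := fun i j => by
    have := congrFun (congrFun h i) j; simpa [Matrix.transpose_apply] using this
  ext i j
  fin_cases i <;> fin_cases j <;>
    simp [hat, vee] <;>
    linarith [h' 0 0, h' 1 1, h' 2 2, h' 0 1, h' 0 2, h' 1 2]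

lemma hat_add (u v : Fin 3 → ℝ) : hat (u + v) = hat u + hat v := by
  ext i j; fin_cases i <;> fin_cases j <;> simp [hat] <;> ring

lemma hat_smul (c : ℝ) (u : Fin 3 → ℝ) : hat (c • u) = c • hat u := by
  ext i j; fin_cases i <;> fin_cases j <;> simp [hat] <;> ring

lemma hat_comm (u v : Fin 3 → ℝ) : hat u * hat v - hat v * hat u = hat (cross u v) := by
  ext i j; fin_cases i <;> fin_cases j <;>
    simp [hat, cross, Matrix.mul_apply, Fin.sum_univ_three] <;> ring

lemma dot_x_cross (u v : Fin 3 → ℝ) : dot u (cross u v) = 0 := by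
  simp [dot, cross]; ring

lemma dot_y_cross (u v : Fin 3 → ℝ) : dot v (cross u v) = 0 := by
  simp [dot, cross]; ring

lemma dot_self_eq_zero' {w : Fin 3 → ℝ} (h : dot w w = 0) : w = 0 := by
  have h' : w 0 * w 0 + w 1 * w 1 + w 2 * w 2 = 0 := h
  have h0 : w 0 = 0 := by nlinarith [h', sq_nonneg (w 0), sq_nonneg (w 1), sq_nonneg (w 2)]
  have h1 : w 1 = 0 := by nlinarith [h', sq_nonneg (w 0), sq_nonneg (w 1), sq_nonneg (w 2)]
  have h2 : w 2 = 0 := by nlinarith [h', sq_nonneg (w 0), sq_nonneg (w 1), sq_nonneg (w 2)]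
  ext i; fin_cases i <;> simp [h0, h1, h2]

lemma cross_cross' (u v : Fin 3 → ℝ) :
    cross u (cross u v) = dot u v • u - dot u u • v := by
  ext i; fin_cases i <;> simp [cross, dot] <;> ring

lemma vec_key {x y : Fin 3 → ℝ} (hx : x ≠ 0) (hy : y ∉ Submodule.span ℝ {x})
    {c d : ℝ} (h : cross x y = c • x + d • y) : False := by
  have hdot : ∀ z w : Fin 3 → ℝ, ∀ a b : ℝ,
      dot (a • z + b • w) (cross x y) = a * dot z (cross x y) + b * dot w (cross x y) := by
    intro z w a b; simp [dot]; ring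
  have huu : dot (cross x y) (cross x y) = 0 := by
    nth_rewrite 1 [h]
    rw [hdot, dot_x_cross, dot_y_cross]; ring
  have hc0 : cross x y = 0 := dot_self_eq_zero' huu
  have hcc := cross_cross' x y
  rw [hc0] at hcc
  have hz : cross x (0 : Fin 3 → ℝ) = 0 := by ext i; fin_cases i <;> simp [cross]
  rw [hz] at hcc
  have hxx : dot x x ≠ 0 := fun h0 => hx (dot_self_eq_zero' h0)
  apply hy
  rw [Submodule.mem_span_singleton]
  refine ⟨dot x y / dot x x, ?_⟩
  have : dot x x • y = dot x y • x := by
    have := hcc.symm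
    rw [sub_eq_zero] at this
    exact this.symm
  ext i
  have := congrFun this i
  simp only [Pi.smul_apply, smul_eq_mul] at this ⊢
  field_simp
  linarith

lemma no2 {X Y : M3} (hX : Xᵀ = -X) (hY : Yᵀ = -Y) (hX0 : X ≠ 0)
    (hYX : Y ∉ Submodule.span ℝ {X}) {c d : ℝ} (h : X * Y - Y * X = c • X + d • Y) :
    False := by
  apply vec_key (x := vee X) (y := vee Y) (c := c) (d := d)
  · intro h0
    apply hX0; rw [← hat_vee hX, h0]
    ext i j; fin_cases i <;> fin_cases j <;> simp [hat, Matrix.vecHead, Matrix.vecTail]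
  · intro hmem
    apply hYX
    rw [Submodule.mem_span_singleton] at hmem ⊢
    obtain ⟨t, ht⟩ := hmem
    exact ⟨t, by rw [← hat_vee hY, ← ht, hat_smul, hat_vee hX]⟩
  · apply hat_inj
    rw [← hat_comm, hat_vee hX, hat_vee hY, h, hat_add, hat_smul, hat_smul,
      hat_vee hX, hat_vee hY]

open Module Submodule

def hatL : (Fin 3 → ℝ) →ₗ[ℝ] M3 where
  toFun := hat
  map_add' := hat_add
  map_smul' := hat_smul

lemma L1 (S : Submodule ℝ (ℝ × M3)) (hskew : ∀ p ∈ S, p.2ᵀ = -p.2)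
    (hbr : ∀ p ∈ S, ∀ q ∈ S, ((0:ℝ), p.2 * q.2 - q.2 * p.2) ∈ S) :
    finrank ℝ (S.map (LinearMap.snd ℝ ℝ M3)) ≠ 2 := by
  intro h2
  set W := S.map (LinearMap.snd ℝ ℝ M3) with hWdef
  have hWskew : ∀ X ∈ W, Xᵀ = -X := by
    rintro X ⟨p, hp, rfl⟩; exact hskew p hp
  have hWbr : ∀ X ∈ W, ∀ Y ∈ W, X * Y - Y * X ∈ W := by
    rintro X ⟨p, hp, rfl⟩ Y ⟨q, hq, rfl⟩
    exact ⟨((0:ℝ), p.2 * q.2 - q.2 * p.2), hbr p hp q hq, rfl⟩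
  -- get a nonzero X in W
  obtain ⟨x, hx⟩ : ∃ x : W, x ≠ 0 := by
    rw [← Module.finrank_pos_iff_exists_ne_zero (R := ℝ)]; omega
  have hX : (x : M3) ∈ W := x.2
  have hX0 : (x : M3) ≠ 0 := fun h => hx (Subtype.ext h)
  -- get Y ∈ W not in span {X}
  obtain ⟨Y, hY, hYX⟩ : ∃ Y ∈ W, Y ∉ Submodule.span ℝ {(x : M3)} := by
    by_contra hcon
    push_neg at hcon
    have hle : W ≤ Submodule.span ℝ {(x : M3)} := hcon
    have := Submodule.finrank_mono (R := ℝ) hle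
    rw [finrank_span_singleton hX0, h2] at this
    omega
  have hlt : Submodule.span ℝ {(x : M3)} < Submodule.span ℝ {(x : M3), Y} := by
    rw [SetLike.lt_iff_le_and_exists]
    exact ⟨Submodule.span_mono (by simp), Y,
      Submodule.subset_span (by simp), hYX⟩
  have h2le : 2 ≤ finrank ℝ (Submodule.span ℝ {(x : M3), Y}) := by
    have := Submodule.finrank_lt_finrank_of_lt hlt
    rw [finrank_span_singleton hX0] at this
    omega
  have hspan_le : Submodule.span ℝ {(x : M3), Y} ≤ W := by
    rw [Submodule.span_le, Set.insert_subset_iff, Set.singleton_subset_iff]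
    exact ⟨hX, hY⟩
  have hWeq : Submodule.span ℝ {(x : M3), Y} = W :=
    Submodule.eq_of_le_of_finrank_le hspan_le (by omega)
  have hmem : (x : M3) * Y - Y * (x : M3) ∈ Submodule.span ℝ {(x : M3), Y} := by
    rw [hWeq]; exact hWbr _ hX _ hY
  rw [Submodule.mem_span_pair] at hmem
  obtain ⟨c, d, hcd⟩ := hmem
  exact no2 (hWskew _ hX) (hWskew _ hY) hX0 hYX hcd.symm

lemma skew_mem_range_hatL {X : M3} (h : Xᵀ = -X) : X ∈ LinearMap.range hatL :=
  ⟨vee X, hat_vee h⟩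

lemma finrank_range_hatL_le : finrank ℝ (LinearMap.range hatL) ≤ 3 := by
  have := LinearMap.finrank_range_le hatL
  rwa [Module.finrank_fin_fun] at this

lemma core (S : Submodule ℝ (ℝ × M3)) (hskew : ∀ p ∈ S, p.2ᵀ = -p.2)
    (hbr : ∀ p ∈ S, ∀ q ∈ S, ((0:ℝ), p.2 * q.2 - q.2 * p.2) ∈ S)
    (hdim : 2 ≤ finrank ℝ S) :
    ((∀ p : ℝ × M3, p ∈ S ↔ p.1 = 0 ∧ p.2ᵀ = -p.2) ∨
     (∀ p : ℝ × M3, p ∈ S ↔ p.2ᵀ = -p.2) ∨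
     (∃ (a : ℝ) (ξ η : M3), ξᵀ = -ξ ∧ ηᵀ = -η ∧
        S = Submodule.span ℝ {(a, ξ), ((0 : ℝ), η)})) := by
  classical
  set f : S →ₗ[ℝ] M3 := (LinearMap.snd ℝ ℝ M3).comp S.subtype with hf
  have hrange : LinearMap.range f = S.map (LinearMap.snd ℝ ℝ M3) := by
    rw [hf, LinearMap.range_comp, Submodule.range_subtype]
  set W := S.map (LinearMap.snd ℝ ℝ M3) with hWdef
  have hrn : finrank ℝ W + finrank ℝ (LinearMap.ker f) = finrank ℝ S := by
    rw [← hrange]; exact LinearMap.finrank_range_add_finrank_ker f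
  have hkermem : ∀ u : LinearMap.ker f, ((u : S) : ℝ × M3).2 = 0 := by
    intro u
    have := u.2
    rw [LinearMap.mem_ker] at this
    exact this
  have hker1 : finrank ℝ (LinearMap.ker f) ≤ 1 := by
    set g : LinearMap.ker f →ₗ[ℝ] ℝ :=
      (LinearMap.fst ℝ ℝ M3).comp (S.subtype.comp (LinearMap.ker f).subtype) with hg
    have hginj : Function.Injective g := by
      intro u v huv
      have h2 : ((u : S) : ℝ × M3).2 = ((v : S) : ℝ × M3).2 := by
        rw [hkermem u, hkermem v]
      have h1 : ((u : S) : ℝ × M3).1 = ((v : S) : ℝ × M3).1 := huv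
      exact Subtype.ext (Subtype.ext (Prod.ext h1 h2))
    have := LinearMap.finrank_le_finrank_of_injective hginj
    simpa using this
  have hWskew : ∀ X ∈ W, Xᵀ = -X := by
    rintro X ⟨p, hp, rfl⟩; exact hskew p hp
  have hWle : W ≤ LinearMap.range hatL := by
    intro X hX; exact skew_mem_range_hatL (hWskew X hX)
  have hWle3 : finrank ℝ W ≤ 3 :=
    le_trans (Submodule.finrank_mono hWle) finrank_range_hatL_le
  have hcases : finrank ℝ W = 0 ∨ finrank ℝ W = 1 ∨ finrank ℝ W = 2 ∨ finrank ℝ W = 3 := by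
    omega
  rcases hcases with h0 | h1 | h2 | h3
  · omega
  · -- dim W = 1 : third alternative
    obtain ⟨η₀, hη₀⟩ : ∃ x : W, x ≠ 0 := by
      rw [← Module.finrank_pos_iff_exists_ne_zero (R := ℝ)]; omega
    have hηW : (η₀ : M3) ∈ W := η₀.2
    have hηne : (η₀ : M3) ≠ 0 := fun h => hη₀ (Subtype.ext h)
    have hWspan : Submodule.span ℝ {(η₀ : M3)} = W :=
      Submodule.eq_of_le_of_finrank_le
        ((Submodule.span_singleton_le_iff_mem _ _).mpr hηW)
        (by rw [finrank_span_singleton hηne]; omega)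
    -- element of the kernel
    obtain ⟨u, hu⟩ : ∃ u : LinearMap.ker f, u ≠ 0 :=
      by
        have hpos : 0 < finrank ℝ (LinearMap.ker f) := by omega
        have hne : LinearMap.ker f ≠ ⊥ := by
          intro hb; rw [hb] at hpos; simp at hpos
        obtain ⟨x, hxk, hx0⟩ := (Submodule.ne_bot_iff _).mp hne
        exact ⟨⟨x, hxk⟩, fun h => hx0 (congrArg Subtype.val h)⟩
    set p : ℝ × M3 := ((u : S) : ℝ × M3) with hp
    have hpS : p ∈ S := ((u : S)).2
    have hp2 : p.2 = 0 := hkermem u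
    have hp1 : p.1 ≠ 0 := by
      intro h
      apply hu
      apply Subtype.ext; apply Subtype.ext
      exact Prod.ext h hp2
    have hηW2 := hηW
    obtain ⟨q, hqS, hq2⟩ := hηW2
    have hq2' : q.2 = (η₀ : M3) := hq2
    have hzeroeta : ((0:ℝ), (η₀ : M3)) ∈ S := by
      have heq : ((0:ℝ), (η₀ : M3)) = q - (q.1 / p.1) • p := by
        apply Prod.ext
        · simp; field_simp; ring
        · simp [hp2, hq2']
      rw [heq]
      exact S.sub_mem hqS (S.smul_mem _ hpS)
    refine Or.inr (Or.inr ⟨p.1, 0, (η₀ : M3), by simp, hWskew _ hηW, ?_⟩)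
    apply le_antisymm
    · intro z hz
      have hz2 : z.2 ∈ W := ⟨z, hz, rfl⟩
      rw [← hWspan, Submodule.mem_span_singleton] at hz2
      obtain ⟨t, ht⟩ := hz2
      rw [Submodule.mem_span_pair]
      refine ⟨z.1 / p.1, t, ?_⟩
      apply Prod.ext
      · simp; field_simp
      · simp [← ht]
    · rw [Submodule.span_le, Set.insert_subset_iff, Set.singleton_subset_iff]
      constructor
      · have : (p.1, (0:M3)) = p := Prod.ext rfl hp2.symm
        rw [this]; exact hpS
      · exact hzeroeta
  · exact absurd h2 (L1 S hskew hbr)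
  · -- dim W = 3 : W is all of skew
    have hWeq : W = LinearMap.range hatL :=
      Submodule.eq_of_le_of_finrank_le hWle (finrank_range_hatL_le.trans (by omega))
    have hfull : ∀ Z : M3, Zᵀ = -Z → Z ∈ W := by
      intro Z hZ; rw [hWeq]; exact skew_mem_range_hatL hZ
    have hGen : ∀ v : Fin 3 → ℝ, ((0:ℝ), hat v) ∈ S := by
      have hmem : ∀ v : Fin 3 → ℝ, ∃ p ∈ S, p.2 = hat v := by
        intro v
        exact Submodule.mem_map.mp (hfull _ (hat_skew v))
      obtain ⟨p0, hp0, he0⟩ := hmem ![1,0,0]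
      obtain ⟨p1, hp1, he1⟩ := hmem ![0,1,0]
      obtain ⟨p2, hp2, he2⟩ := hmem ![0,0,1]
      have c12 : cross ![0,1,0] ![0,0,1] = ![1,0,0] := by
        ext i; fin_cases i <;> simp [cross]
      have c20 : cross ![0,0,1] ![1,0,0] = ![0,1,0] := by
        ext i; fin_cases i <;> simp [cross]
      have c01 : cross ![1,0,0] ![0,1,0] = ![0,0,1] := by
        ext i; fin_cases i <;> simp [cross]
      have h0 : ((0:ℝ), hat ![1,0,0]) ∈ S := by
        have := hbr p1 hp1 p2 hp2
        rwa [he1, he2, hat_comm, c12] at this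
      have h1 : ((0:ℝ), hat ![0,1,0]) ∈ S := by
        have := hbr p2 hp2 p0 hp0
        rwa [he2, he0, hat_comm, c20] at this
      have h2' : ((0:ℝ), hat ![0,0,1]) ∈ S := by
        have := hbr p0 hp0 p1 hp1
        rwa [he0, he1, hat_comm, c01] at this
      intro v
      have hv : hat v = v 0 • hat ![1,0,0] + v 1 • hat ![0,1,0] + v 2 • hat ![0,0,1] := by
        have hvsum : v = v 0 • ![1,0,0] + v 1 • ![0,1,0] + v 2 • ![0,0,1] := by
          ext i; fin_cases i <;> simp
        rw [← hat_smul, ← hat_smul, ← hat_smul, ← hat_add, ← hat_add, ← hvsum]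
      have heq : ((0:ℝ), hat v) =
          v 0 • ((0:ℝ), hat ![1,0,0]) + v 1 • ((0:ℝ), hat ![0,1,0])
            + v 2 • ((0:ℝ), hat ![0,0,1]) := by
        rw [hv]; simp [Prod.ext_iff]
      rw [heq]
      exact S.add_mem (S.add_mem (S.smul_mem _ h0) (S.smul_mem _ h1)) (S.smul_mem _ h2')
    have hSkewIn : ∀ Z : M3, Zᵀ = -Z → ((0:ℝ), Z) ∈ S := by
      intro Z hZ
      have := hGen (vee Z)
      rwa [hat_vee hZ] at this
    by_cases hex : ∃ q ∈ S, q.1 ≠ 0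
    · refine Or.inr (Or.inl fun p => ⟨fun hp => hskew p hp, fun hp => ?_⟩)
      obtain ⟨q, hqS, hq1⟩ := hex
      have hqskew := hskew q hqS
      have hskew2 : (p.2 - (p.1 / q.1) • q.2)ᵀ = -(p.2 - (p.1 / q.1) • q.2) := by
        rw [Matrix.transpose_sub, Matrix.transpose_smul, hp, hqskew]
        module
      have heq : p = (p.1 / q.1) • q + ((0:ℝ), p.2 - (p.1 / q.1) • q.2) := by
        apply Prod.ext
        · simp; field_simp
        · simp
      rw [heq]
      exact S.add_mem (S.smul_mem _ hqS) (hSkewIn _ hskew2)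
    · push_neg at hex
      refine Or.inl fun p => ⟨fun hp => ⟨hex p hp, hskew p hp⟩, fun ⟨h1, h2⟩ => ?_⟩
      have : p = ((0:ℝ), p.2) := Prod.ext h1 rfl
      rw [this]
      exact hSkewIn p.2 h2

/-- Subalgebras of `so(2) ⊕ so(3)` of dimension at least 2, where `so(2) ⊕ so(3)` is
modelled inside `ℝ × M₃(ℝ)` (elements `(a, X)` with `X` skew-symmetric, bracket
`[(a,X),(b,Y)] = (0, XY - YX)`).  Every such subalgebra is `{0} ⊕ so(3)`, or all of
`so(2) ⊕ so(3)`, or is spanned by two elements `(a, ξ)` and `(0, η)`.  In particular no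
2-dimensional subalgebra projects onto a 2-dimensional subspace of `so(3)`, and every
3-dimensional proper subalgebra is `{0} ⊕ so(3)`. -/
theorem subalgebras_of_so2_oplus_so3 :
    (∀ S : Submodule ℝ (ℝ × Matrix (Fin 3) (Fin 3) ℝ),
      (∀ p ∈ S, p.2ᵀ = -p.2) →
      (∀ p ∈ S, ∀ q ∈ S, ((0 : ℝ), p.2 * q.2 - q.2 * p.2) ∈ S) →
      2 ≤ Module.finrank ℝ S →
      ((∀ p : ℝ × Matrix (Fin 3) (Fin 3) ℝ, p ∈ S ↔ p.1 = 0 ∧ p.2ᵀ = -p.2) ∨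
       (∀ p : ℝ × Matrix (Fin 3) (Fin 3) ℝ, p ∈ S ↔ p.2ᵀ = -p.2) ∨
       (∃ (a : ℝ) (ξ η : Matrix (Fin 3) (Fin 3) ℝ), ξᵀ = -ξ ∧ ηᵀ = -η ∧
          S = Submodule.span ℝ {(a, ξ), ((0 : ℝ), η)}))) ∧
    (∀ S : Submodule ℝ (ℝ × Matrix (Fin 3) (Fin 3) ℝ),
      (∀ p ∈ S, p.2ᵀ = -p.2) →
      (∀ p ∈ S, ∀ q ∈ S, ((0 : ℝ), p.2 * q.2 - q.2 * p.2) ∈ S) →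
      Module.finrank ℝ S = 2 →
      Module.finrank ℝ (S.map (LinearMap.snd ℝ ℝ (Matrix (Fin 3) (Fin 3) ℝ))) ≠ 2) ∧
    (∀ S : Submodule ℝ (ℝ × Matrix (Fin 3) (Fin 3) ℝ),
      (∀ p ∈ S, p.2ᵀ = -p.2) →
      (∀ p ∈ S, ∀ q ∈ S, ((0 : ℝ), p.2 * q.2 - q.2 * p.2) ∈ S) →
      Module.finrank ℝ S = 3 →
      ¬(∀ p : ℝ × Matrix (Fin 3) (Fin 3) ℝ, p ∈ S ↔ p.2ᵀ = -p.2) →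
      (∀ p : ℝ × Matrix (Fin 3) (Fin 3) ℝ, p ∈ S ↔ p.1 = 0 ∧ p.2ᵀ = -p.2)) := by

  refine ⟨fun S hskew hbr hdim => core S hskew hbr hdim,
    fun S hskew hbr _ => L1 S hskew hbr,
    fun S hskew hbr hdim hnfull => ?_⟩
  rcases core S hskew hbr (by simp [hdim]) with h | h | ⟨a, ξ, η, hξ, hη, hS⟩
  · exact h
  · exact absurd h hnfull
  · exfalso
    have hle2 : Module.finrank ℝ S ≤ 2 := by
      classical
      rw [hS]
      refine (finrank_span_le_card _).trans ?_
      rw [Set.toFinset_insert, Set.toFinset_singleton]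
      exact (Finset.card_insert_le _ _).trans (by simp)
    omega
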